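/- Let p < q be primes. Let G be a transitive subgroup of S_{pq}, N₁ a transitive normal subgroup of G, and N₂ a non-transitive normal subgroup of G with |N₁| = |N₂|. Then there is an injective homomorphism θ : G → S_p ≀ S_q (the wreath product acting imprimitively on {1,...,p} × {1,...,q}) such that: (i) θ(N₁) acts transitively on {1,...,p} × {1,...,q}; (ii) θ(N₂) lies in the kernel of the block-projection p₁ : S_p ≀ S_q → S_p; and (iii) for each i, the i-th coordinate projection πᵢ(θ(N₂)) is a transitive subgroup of S_q. -/
import Mathlib

open MulAction


theorem stmt_14 (p q : ℕ) (hp : p.Prime) (hq : q.Prime) (hpq : p < q)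
    (G N₁ N₂ : Subgroup (Equiv.Perm (Fin (p * q))))
    (hG : ∀ a b : Fin (p * q), ∃ σ ∈ G, σ a = b)
    (hN₁G : N₁ ≤ G) (hN₂G : N₂ ≤ G)
    (hnorm₁ : ∀ g ∈ G, ∀ x ∈ N₁, g * x * g⁻¹ ∈ N₁)
    (hnorm₂ : ∀ g ∈ G, ∀ x ∈ N₂, g * x * g⁻¹ ∈ N₂)
    (hN₁trans : ∀ a b : Fin (p * q), ∃ σ ∈ N₁, σ a = b)
    (hN₂trans : ¬ (∀ a b : Fin (p * q), ∃ σ ∈ N₂, σ a = b))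
    (hcard : Nat.card N₁ = Nat.card N₂) :
    ∃ θ : G →* Equiv.Perm (Fin p × Fin q),
      Function.Injective θ ∧
      -- θ(G) lands in the wreath product S_p ≀ S_q (block permutations)
      (∀ g : G, ∀ i : Fin p, ∀ j j' : Fin q, (θ g (i, j)).1 = (θ g (i, j')).1) ∧
      -- (i) θ(N₁) is transitive on Fin p × Fin q
      (∀ a b : Fin p × Fin q, ∃ g : G, (g : Equiv.Perm (Fin (p * q))) ∈ N₁ ∧ θ g a = b) ∧
      -- (ii) θ(N₂) ⊆ ker p₁
      (∀ g : G, (g : Equiv.Perm (Fin (p * q))) ∈ N₂ →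
        ∀ x : Fin p × Fin q, (θ g x).1 = x.1) ∧
      -- (iii) each coordinate projection of θ(N₂) is transitive on Fin q
      (∀ i : Fin p, ∀ a b : Fin q, ∃ g : G,
        (g : Equiv.Perm (Fin (p * q))) ∈ N₂ ∧ θ g (i, a) = (i, b)) := by
  classical
  
  have hq0 : 0 < q := hq.pos
  have hp0 : 0 < p := hp.pos
  have hpq0 : 0 < p * q := Nat.mul_pos hp0 hq0
  haveI : NeZero (p * q) := ⟨hpq0.ne'⟩
  -- membership in orbits of N₂, explicitly
  have hmem : ∀ (x y : (Fin (p * q))), y ∈ MulAction.orbit N₂ x ↔ ∃ n ∈ N₂, n x = y := by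
    intro x y
    constructor
    · rintro ⟨n, rfl⟩; exact ⟨n, n.2, rfl⟩
    · rintro ⟨n, hn, rfl⟩; exact ⟨⟨n, hn⟩, rfl⟩
  -- Step 1: G maps orbits to orbits
  have horb_image : ∀ g ∈ G, ∀ x : (Fin (p * q)),
      MulAction.orbit N₂ (g x) = (g : Equiv.Perm (Fin (p * q))) '' MulAction.orbit N₂ x := by
    intro g hg x
    ext z
    rw [hmem]
    constructor
    · rintro ⟨n, hn, rfl⟩
      refine ⟨(g⁻¹ * n * g) x, (hmem _ _).2 ⟨g⁻¹ * n * g, ?_, rfl⟩, ?_⟩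
      · have := hnorm₂ g⁻¹ (G.inv_mem hg) n hn
        rwa [inv_inv] at this
      · simp [Equiv.Perm.mul_apply]
    · rintro ⟨w, hw, rfl⟩
      rw [hmem] at hw
      obtain ⟨n, hn, rfl⟩ := hw
      exact ⟨g * n * g⁻¹, hnorm₂ g hg n hn, by simp [Equiv.Perm.mul_apply]⟩
  -- Step 2: all orbits of N₂ have the same cardinality
  have hsamecard : ∀ x y : (Fin (p * q)),
      Nat.card (MulAction.orbit N₂ x) = Nat.card (MulAction.orbit N₂ y) := by
    intro x y
    obtain ⟨g, hg, hgx⟩ := hG x y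
    rw [← hgx, horb_image g hg x, Nat.card_image_of_injective g.injective]
  -- Step 3: p * q ∣ Nat.card N₂
  have hdvd₂ : p * q ∣ Nat.card N₂ := by
    rw [← hcard]
    have horb : MulAction.orbit N₁ (0 : (Fin (p * q))) = Set.univ := by
      ext b
      simp only [Set.mem_univ, iff_true]
      obtain ⟨σ, hσ, hσ0⟩ := hN₁trans 0 b
      exact ⟨⟨σ, hσ⟩, hσ0⟩
    letI : Fintype N₁ := Fintype.ofFinite _
    letI : Fintype (MulAction.orbit N₁ (0 : (Fin (p * q)))) := Fintype.ofFinite _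
    have := MulAction.card_orbit_mul_card_stabilizer_eq_card_group N₁ (0 : (Fin (p * q)))
    have hcardorb : Fintype.card (MulAction.orbit N₁ (0 : (Fin (p * q)))) = p * q := by
      rw [← Nat.card_eq_fintype_card, horb, Nat.card_coe_set_eq, Set.ncard_univ,
        Nat.card_eq_fintype_card, Fintype.card_fin]
    rw [hcardorb] at this
    rw [Nat.card_eq_fintype_card]
    exact Dvd.intro _ this
  -- Step 4: Cauchy — element of order q in N₂
  haveI : Fact q.Prime := ⟨hq⟩
  letI : Fintype N₂ := Fintype.ofFinite _
  obtain ⟨σ, hσq⟩ : ∃ σ : N₂, orderOf σ = q := by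
    apply exists_prime_orderOf_dvd_card q
    rw [← Nat.card_eq_fintype_card]
    exact dvd_trans (Dvd.intro_left p rfl) hdvd₂
  -- Step 5: some orbit of N₂ has cardinality ≥ q
  have hσne : (σ : Equiv.Perm (Fin (p * q))) ≠ 1 := by
    intro h
    have : σ = 1 := by exact_mod_cast Subtype.ext h
    rw [this, orderOf_one] at hσq
    exact hq.one_lt.ne' hσq.symm
  obtain ⟨x₀, hx₀⟩ : ∃ x : (Fin (p * q)), (σ : Equiv.Perm (Fin (p * q))) x ≠ x := by
    by_contra h
    push_neg at h
    exact hσne (Equiv.ext h)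
  have hqled : ∀ x : (Fin (p * q)), q ≤ Nat.card (MulAction.orbit N₂ x) := by
    intro x
    rw [hsamecard x x₀]
    set H := Subgroup.zpowers (σ : Equiv.Perm (Fin (p * q))) with hH
    have hHcard : Nat.card H = q := by
      rw [Nat.card_zpowers]
      rw [Subgroup.orderOf_coe σ]
      exact hσq
    have hsub : MulAction.orbit H x₀ ⊆ MulAction.orbit N₂ x₀ := by
      rintro z ⟨⟨n, hn⟩, rfl⟩
      obtain ⟨k, rfl⟩ := hn
      exact (hmem _ _).2 ⟨_, N₂.zpow_mem σ.2 k, rfl⟩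
    have horbH : Nat.card (MulAction.orbit H x₀) = q := by
      letI : Fintype H := Fintype.ofFinite _
      letI : Fintype (MulAction.orbit H x₀) := Fintype.ofFinite _
      have hds := MulAction.card_orbit_mul_card_stabilizer_eq_card_group H x₀
      have hdvd : Nat.card (MulAction.orbit H x₀) ∣ q := by
        have hdvd' : Nat.card (MulAction.orbit H x₀) ∣ Nat.card H := by
          rw [Nat.card_eq_fintype_card, Nat.card_eq_fintype_card]
          exact Dvd.intro _ hds
        rwa [hHcard] at hdvd'
      rcases (Nat.Prime.eq_one_or_self_of_dvd hq _ hdvd) with h1 | h1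
      · exfalso
        rw [Nat.card_eq_one_iff_unique] at h1
        have hx : x₀ ∈ MulAction.orbit H x₀ := MulAction.mem_orbit_self x₀
        have hσx : (σ : Equiv.Perm (Fin (p * q))) x₀ ∈ MulAction.orbit H x₀ :=
          ⟨⟨σ, Subgroup.mem_zpowers _⟩, rfl⟩
        have := h1.1.allEq ⟨_, hσx⟩ ⟨_, hx⟩
        exact hx₀ (Subtype.ext_iff.mp this)
      · exact h1
    calc q = Nat.card (MulAction.orbit H x₀) := horbH.symm
      _ ≤ Nat.card (MulAction.orbit N₂ x₀) := by
        rw [Nat.card_coe_set_eq, Nat.card_coe_set_eq]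
        exact Set.ncard_le_ncard hsub (Set.toFinite _)
  -- Step 7: orbits are proper
  have hdlt : ∀ x : (Fin (p * q)), Nat.card (MulAction.orbit N₂ x) < p * q := by
    intro x
    push_neg at hN₂trans
    obtain ⟨a, b, hab⟩ := hN₂trans
    rw [hsamecard x a]
    have hne : MulAction.orbit N₂ a ≠ Set.univ := by
      intro h
      have : b ∈ MulAction.orbit N₂ a := h ▸ Set.mem_univ b
      obtain ⟨n, hn, hna⟩ := (hmem _ _).1 this
      exact hab n hn hna
    have : MulAction.orbit N₂ a ⊂ Set.univ := (Set.ssubset_univ_iff).2 hne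
    calc Nat.card (MulAction.orbit N₂ a) = (MulAction.orbit N₂ a).ncard :=
          Nat.card_coe_set_eq _
      _ < (Set.univ : Set (Fin (p * q))).ncard := Set.ncard_lt_ncard this (Set.toFinite _)
      _ = p * q := by rw [Set.ncard_univ, Nat.card_eq_fintype_card, Fintype.card_fin]
  -- Step 8: counting
  set Q := MulAction.orbitRel.Quotient N₂ (Fin (p * q)) with hQ
  letI : Fintype Q := Fintype.ofFinite _
  letI : ∀ ω : Q, Fintype (MulAction.orbit N₂ (Quotient.out ω)) := fun _ => Fintype.ofFinite _
  set d := Nat.card (MulAction.orbit N₂ (0 : (Fin (p * q)))) with hd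
  have hcount : Fintype.card Q * d = p * q := by
    have h1 : Fintype.card (Fin (p * q)) = Fintype.card (Σ ω : Q, MulAction.orbit N₂ (Quotient.out ω)) :=
      Fintype.card_congr (MulAction.selfEquivSigmaOrbits N₂ (Fin (p * q)))
    rw [Fintype.card_sigma] at h1
    have h2 : ∀ ω : Q, Fintype.card (MulAction.orbit N₂ (Quotient.out ω)) = d := by
      intro ω
      rw [← Nat.card_eq_fintype_card]
      exact hsamecard _ _
    rw [Finset.sum_congr rfl (fun ω _ => h2 ω), Finset.sum_const, smul_eq_mul,
      Finset.card_univ] at h1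
    rw [← h1, Fintype.card_fin]
  -- Step 9: d = q and card Q = p
  have hdq : d = q ∧ Fintype.card Q = p := by
    set m := Fintype.card Q with hm
    have hqd : q ≤ d := hqled 0
    have hdlt' : d < p * q := hdlt 0
    have hm1 : m ≠ 1 := by
      intro h
      rw [h, one_mul] at hcount
      exact hdlt'.ne hcount
    have hm0 : m ≠ 0 := by
      intro h
      rw [h, zero_mul] at hcount
      exact hpq0.ne' hcount.symm
    have hmp : m ≤ p := by
      have : m * q ≤ m * d := Nat.mul_le_mul_left m hqd
      rw [hcount] at this
      have h' : m * q ≤ p * q := this.trans_eq rfl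
      exact Nat.le_of_mul_le_mul_right h' hq0
    obtain ⟨r, hr, hrm⟩ := Nat.exists_prime_and_dvd hm1
    have hrpq : r ∣ p * q := hrm.trans (Dvd.intro d hcount)
    have hrp : r = p := by
      rcases (Nat.Prime.dvd_mul hr).1 hrpq with h | h
      · exact (Nat.prime_dvd_prime_iff_eq hr hp).1 h
      · exfalso
        have : r = q := (Nat.prime_dvd_prime_iff_eq hr hq).1 h
        have : q ≤ m := this ▸ Nat.le_of_dvd (Nat.pos_of_ne_zero hm0) hrm
        omega
    have hpm : p ≤ m := hrp ▸ Nat.le_of_dvd (Nat.pos_of_ne_zero hm0) hrm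
    have hmeq : m = p := le_antisymm hmp hpm
    refine ⟨?_, hmeq⟩
    rw [hmeq] at hcount
    exact Nat.eq_of_mul_eq_mul_left hp0 hcount
  -- Step 11: build the equivalence
  have eQ : Q ≃ Fin p := Fintype.equivFinOfCardEq hdq.2
  set q' : (Fin (p * q)) → Fin p := fun x => eQ (Quotient.mk'' x) with hq'
  have hmk : ∀ x y : (Fin (p * q)), (Quotient.mk'' x : Q) = Quotient.mk'' y ↔
      x ∈ MulAction.orbit N₂ y := by
    intro x y
    rw [Quotient.eq'']
    exact MulAction.orbitRel_apply
  have hfibercard : ∀ i : Fin p, Nat.card {x : (Fin (p * q)) // q' x = i} = q := by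
    intro i
    set y := Quotient.out (eQ.symm i) with hy
    have hEquiv : {x : (Fin (p * q)) // q' x = i} ≃ MulAction.orbit N₂ y := by
      apply Equiv.subtypeEquivRight
      intro x
      rw [← hmk]
      simp only [hq', hy]
      rw [Quotient.out_eq']
      constructor
      · intro h; rw [← h]; simp
      · intro h; rw [h]; simp
    rw [Nat.card_congr hEquiv, hsamecard y 0, ← hd, hdq.1]
  have fE : ∀ i : Fin p, {x : (Fin (p * q)) // q' x = i} ≃ Fin q := fun i =>
    Finite.equivFinOfCardEq (hfibercard i)
  set e : (Fin (p * q)) ≃ Fin p × Fin q :=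
    ((Equiv.sigmaFiberEquiv q').symm.trans
      ((Equiv.sigmaCongrRight fE).trans (Equiv.sigmaEquivProd (Fin p) (Fin q)))) with he
  have hefst : ∀ x : (Fin (p * q)), (e x).1 = q' x := fun _ => rfl
  -- θ
  have hq'app : ∀ x : Fin (p * q), q' x = eQ (Quotient.mk'' x) := fun x => by rw [hq']
  have hfst : ∀ x : Fin (p * q), (e x).1 = eQ (Quotient.mk'' x) :=
    fun x => (hefst x).trans (hq'app x)
  have hsymmfst : ∀ z : Fin p × Fin q, eQ (Quotient.mk'' (e.symm z)) = z.1 := by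
    intro z
    rw [← hfst, Equiv.apply_symm_apply]
  refine ⟨MonoidHom.mk' (fun g => (Equiv.permCongr e) (g : Equiv.Perm (Fin (p * q)))) ?_,
    ?_, ?_, ?_, ?_, ?_⟩
  · intro a b
    apply Equiv.ext
    intro x
    simp [Equiv.permCongr_apply, Equiv.Perm.mul_apply, Equiv.symm_apply_apply]
  · intro a b hab
    apply Subtype.ext
    exact (Equiv.permCongr e).injective (by exact_mod_cast hab)
  · -- wreath property
    intro g i j j'
    simp only [MonoidHom.mk'_apply, Equiv.permCongr_apply, hfst]
    have key : ∀ y z : Fin (p * q), (Quotient.mk'' y : Q) = Quotient.mk'' z →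
        (Quotient.mk'' ((g : Equiv.Perm (Fin (p * q))) y) : Q) =
          Quotient.mk'' ((g : Equiv.Perm (Fin (p * q))) z) := by
      intro y z hyz
      rw [hmk] at hyz ⊢
      obtain ⟨n, hn, rfl⟩ := (hmem _ _).1 hyz
      exact (hmem _ _).2 ⟨(g : Equiv.Perm (Fin (p * q))) * n * (g : Equiv.Perm (Fin (p * q)))⁻¹,
        hnorm₂ g g.2 n hn, by simp [Equiv.Perm.mul_apply]⟩
    have h1 : (Quotient.mk'' (e.symm (i, j)) : Q) = Quotient.mk'' (e.symm (i, j')) :=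
      eQ.injective ((hsymmfst (i, j)).trans (hsymmfst (i, j')).symm)
    rw [key _ _ h1]
  · -- (i) N₁ transitivity
    intro a b
    obtain ⟨τ, hτ, hτab⟩ := hN₁trans (e.symm a) (e.symm b)
    refine ⟨⟨τ, hN₁G hτ⟩, hτ, ?_⟩
    simp only [MonoidHom.mk'_apply, Equiv.permCongr_apply]
    rw [hτab, Equiv.apply_symm_apply]
  · -- (ii) N₂ in kernel of p₁
    intro g hg x
    simp only [MonoidHom.mk'_apply, Equiv.permCongr_apply, hfst]
    have h1 : (Quotient.mk'' ((g : Equiv.Perm (Fin (p * q))) (e.symm x)) : Q) =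
        Quotient.mk'' (e.symm x) := by
      rw [hmk]
      exact (hmem _ _).2 ⟨g, hg, rfl⟩
    rw [h1, hsymmfst]
  · -- (iii) transitivity on each block
    intro i a b
    have h1 : (Quotient.mk'' (e.symm (i, b)) : Q) = Quotient.mk'' (e.symm (i, a)) :=
      eQ.injective ((hsymmfst (i, b)).trans (hsymmfst (i, a)).symm)
    rw [hmk] at h1
    obtain ⟨n, hn, hna⟩ := (hmem _ _).1 h1
    refine ⟨⟨n, hN₂G hn⟩, hn, ?_⟩
    simp only [MonoidHom.mk'_apply, Equiv.permCongr_apply]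
    rw [hna, Equiv.apply_symm_apply]
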